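/- With a_δ = ⌊1/δ⌋δ for δ ∈ (0,1/2), the discrete maxima converge to the continuous supremum: max_{t∈[0,a_δ]∩δℤ} Z(t) → sup_{t∈[0,1]} Z(t) in probability as δ ↓ 0, and consequently lim_{δ↓0} E[ max_{t∈[0,a_δ]∩δℤ} Z(t) ] = E[ sup_{t∈[0,1]} Z(t) ] < ∞. -/

import Mathlib

open MeasureTheory ENNReal Filter Set Topology

/-- The grid `δ ℤ ⊆ ℝ`, with the convention `0 ℤ = ℝ`. -/
noncomputable def pickandsGrid1 (δ : ℝ) : Set ℝ :=
  if δ = 0 then Set.univ else {t | ∃ k : ℤ, t = δ * k}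

/-- `E[ sup_{t ∈ S} Z(t) ]`. -/
noncomputable def esupField1 {Ω : Type*} [MeasurableSpace Ω] (P : Measure Ω)
    (Z : ℝ → Ω → ℝ) (S : Set ℝ) : ℝ≥0∞ :=
  ∫⁻ ω, ⨆ t ∈ S, ENNReal.ofReal (Z t ω) ∂P

private lemma aux_real_biSup_le {f : ℝ → ℝ} {S : Set ℝ} {c : ℝ} (hc : 0 ≤ c)
    (hb : ∀ t ∈ S, f t ≤ c) : (⨆ t ∈ S, f t) ≤ c :=
  Real.iSup_le (fun t => Real.iSup_le (fun ht => hb t ht) hc) hc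

private lemma aux_le_real_biSup {f : ℝ → ℝ} {S : Set ℝ} {c : ℝ} (hc : 0 ≤ c)
    (hb : ∀ t ∈ S, f t ≤ c) {t : ℝ} (ht : t ∈ S) :
    f t ≤ ⨆ t ∈ S, f t := by
  have h1 : (⨆ _ : t ∈ S, f t) = f t := ciSup_pos ht
  rw [← h1]
  refine le_ciSup (f := fun t => ⨆ _ : t ∈ S, f t) ⟨c, ?_⟩ t
  rintro x ⟨t', rfl⟩
  exact Real.iSup_le (fun ht' => hb t' ht') hc

private lemma aux_ofReal_biSup {f : ℝ → ℝ} {S : Set ℝ} {c : ℝ}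
    (hnn : ∀ t, 0 ≤ f t) (hc : 0 ≤ c) (hb : ∀ t ∈ S, f t ≤ c) :
    ENNReal.ofReal (⨆ t ∈ S, f t) = ⨆ t ∈ S, ENNReal.ofReal (f t) := by
  refine le_antisymm ?_ ?_
  · rcases eq_or_ne (⨆ t ∈ S, ENNReal.ofReal (f t)) ⊤ with h | h
    · rw [h]; exact le_top
    · have h0 : (0:ℝ) ≤ (⨆ t ∈ S, ENNReal.ofReal (f t)).toReal := ENNReal.toReal_nonneg
      have h1 : ∀ t ∈ S, f t ≤ (⨆ t ∈ S, ENNReal.ofReal (f t)).toReal := by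
        intro t ht
        have h2 : ENNReal.ofReal (f t) ≤ ⨆ t ∈ S, ENNReal.ofReal (f t) :=
          le_iSup₂ (f := fun t (_ : t ∈ S) => ENNReal.ofReal (f t)) t ht
        have h3 := ENNReal.toReal_mono h h2
        rwa [ENNReal.toReal_ofReal (hnn t)] at h3
      calc ENNReal.ofReal (⨆ t ∈ S, f t)
          ≤ ENNReal.ofReal (⨆ t ∈ S, ENNReal.ofReal (f t)).toReal :=
            ENNReal.ofReal_le_ofReal (aux_real_biSup_le h0 h1)
        _ = ⨆ t ∈ S, ENNReal.ofReal (f t) := ENNReal.ofReal_toReal h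
  · exact iSup₂_le fun t ht => ENNReal.ofReal_le_ofReal (aux_le_real_biSup hc hb ht)

private lemma aux_tendsto_gp {s : ℝ} (hs : 0 ≤ s) :
    Tendsto (fun δ : ℝ => δ * (⌊s / δ⌋ : ℝ)) (𝓝[>] 0) (𝓝 s) := by
  have hev : ∀ᶠ δ in 𝓝[>] (0:ℝ), δ * (⌊s / δ⌋ : ℝ) ≤ s := by
    filter_upwards [self_mem_nhdsWithin] with δ (hδ : 0 < δ)
    have h1 : (⌊s / δ⌋ : ℝ) ≤ s / δ := Int.floor_le (s / δ)
    have h2 : δ * (⌊s / δ⌋ : ℝ) ≤ δ * (s / δ) := by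
      exact mul_le_mul_of_nonneg_left h1 hδ.le
    calc δ * (⌊s / δ⌋ : ℝ) ≤ δ * (s / δ) := h2
      _ = s := by field_simp
  have hev2 : ∀ᶠ δ in 𝓝[>] (0:ℝ), s - δ ≤ δ * (⌊s / δ⌋ : ℝ) := by
    filter_upwards [self_mem_nhdsWithin] with δ (hδ : 0 < δ)
    have h1 : s / δ - 1 < (⌊s / δ⌋ : ℝ) := Int.sub_one_lt_floor (s / δ)
    have h2 : δ * (s / δ - 1) ≤ δ * (⌊s / δ⌋ : ℝ) :=
      mul_le_mul_of_nonneg_left h1.le hδ.le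
    have h3 : δ * (s / δ - 1) = s - δ := by field_simp
    linarith
  have hlo : Tendsto (fun δ : ℝ => s - δ) (𝓝[>] 0) (𝓝 s) := by
    have h : Tendsto (fun δ : ℝ => s - δ) (𝓝 0) (𝓝 (s - 0)) :=
      tendsto_const_nhds.sub tendsto_id
    simpa using h.mono_left nhdsWithin_le_nhds
  exact tendsto_of_tendsto_of_tendsto_of_le_of_le' hlo tendsto_const_nhds hev2 hev

private lemma aux_tendsto_biSup {ι β : Type*} {l : Filter β}
    {f : ι → β → ℝ≥0∞} {g : ι → ℝ≥0∞} (s : Finset ι)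
    (h : ∀ i ∈ s, Tendsto (f i) l (𝓝 (g i))) :
    Tendsto (fun m => ⨆ i ∈ s, f i m) l (𝓝 (⨆ i ∈ s, g i)) := by
  classical
  induction s using Finset.induction_on with
  | empty => simpa using (tendsto_const_nhds : Tendsto (fun _ : β => (⊥ : ℝ≥0∞)) l _)
  | @insert a s ha ih =>
    simp only [Finset.iSup_insert]
    have h1 : Tendsto (f a) l (𝓝 (g a)) := h a (Finset.mem_insert_self a s)
    have h2 := ih (fun i hi => h i (Finset.mem_insert_of_mem hi))
    have := h1.max h2
    simpa using this

theorem pickands_discrete_max_convergence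
    {Ω : Type*} [MeasurableSpace Ω] (P : Measure Ω) [IsProbabilityMeasure P]
    (Z : ℝ → Ω → ℝ)
    (hjm : Measurable (Function.uncurry Z))
    (hnn : ∀ t ω, 0 ≤ Z t ω)
    (hsep : ∃ D₀ : Set ℝ, D₀.Countable ∧ Dense D₀ ∧
      ∀ᵐ ω ∂P, ∀ U : Set ℝ, IsOpen U →
        (⨆ t ∈ U ∩ D₀, ENNReal.ofReal (Z t ω)) = ⨆ t ∈ U, ENNReal.ofReal (Z t ω))
    (hsc : ∀ t : ℝ, ∀ ε > (0 : ℝ),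
      Tendsto (fun s => P {ω | ε ≤ |Z s ω - Z t ω|}) (𝓝 t) (𝓝 0))
    (hfin : esupField1 P Z (Set.Icc 0 1) ≠ ⊤) :
    (∀ ε > (0 : ℝ),
      Tendsto
        (fun δ : ℝ => P {ω |
          ε ≤ |(⨆ t ∈ Set.Icc 0 ((⌊1 / δ⌋ : ℝ) * δ) ∩ pickandsGrid1 δ, Z t ω) -
            ⨆ t ∈ Set.Icc (0 : ℝ) 1, Z t ω|})
        (𝓝[>] 0) (𝓝 0)) ∧
    Tendsto
      (fun δ : ℝ => esupField1 P Z (Set.Icc 0 ((⌊1 / δ⌋ : ℝ) * δ) ∩ pickandsGrid1 δ))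
      (𝓝[>] 0) (𝓝 (esupField1 P Z (Set.Icc 0 1))) ∧
    esupField1 P Z (Set.Icc 0 1) < ⊤ := by
  obtain ⟨D₀, hD₀c, hD₀d, hD₀ae⟩ := hsep
  -- measurability of sections
  have hZm : ∀ t : ℝ, Measurable (fun ω => Z t ω) := fun t =>
    hjm.comp measurable_prodMk_left
  -- the countable dense-in-distribution set D
  set D : Set ℝ := insert 0 (insert 1 (Ioo 0 1 ∩ D₀)) with hD
  have hDc : D.Countable := by
    apply Set.Countable.insert
    apply Set.Countable.insert
    exact hD₀c.mono (inter_subset_right)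
  have hD0 : (0:ℝ) ∈ D := mem_insert _ _
  obtain ⟨e, hrange⟩ := hDc.exists_eq_range ⟨0, hD0⟩
  have hDsub : D ⊆ Icc (0:ℝ) 1 := by
    rintro t (rfl | rfl | ⟨ht, _⟩)
    · exact ⟨le_refl 0, zero_le_one⟩
    · exact ⟨zero_le_one, le_refl 1⟩
    · exact ⟨ht.1.le, ht.2.le⟩
  have he : ∀ i, e i ∈ Icc (0:ℝ) 1 := fun i => hDsub (hrange ▸ mem_range_self i)
  -- pointwise separability consequence
  have hpt : ∀ ω, (∀ U : Set ℝ, IsOpen U →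
      (⨆ t ∈ U ∩ D₀, ENNReal.ofReal (Z t ω)) = ⨆ t ∈ U, ENNReal.ofReal (Z t ω)) →
      (⨆ t ∈ Icc (0:ℝ) 1, ENNReal.ofReal (Z t ω)) = ⨆ i, ENNReal.ofReal (Z (e i) ω) := by
    intro ω hU
    have h1 : Icc (0:ℝ) 1 = insert 0 (insert 1 (Ioo 0 1)) := by
      ext x
      simp only [mem_Icc, mem_insert_iff, mem_Ioo]
      constructor
      · rintro ⟨h0, h1⟩
        rcases eq_or_lt_of_le h0 with h | h
        · exact Or.inl h.symm
        rcases eq_or_lt_of_le h1 with h' | h'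
        · exact Or.inr (Or.inl h')
        · exact Or.inr (Or.inr ⟨h, h'⟩)
      · rintro (rfl | rfl | ⟨h, h'⟩)
        · exact ⟨le_refl 0, zero_le_one⟩
        · exact ⟨zero_le_one, le_refl 1⟩
        · exact ⟨h.le, h'.le⟩
    have h2 := hU (Ioo 0 1) isOpen_Ioo
    calc (⨆ t ∈ Icc (0:ℝ) 1, ENNReal.ofReal (Z t ω))
        = ⨆ t ∈ insert (0:ℝ) (insert 1 (Ioo 0 1)), ENNReal.ofReal (Z t ω) := by rw [h1]
      _ = ⨆ t ∈ D, ENNReal.ofReal (Z t ω) := by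
          rw [hD, iSup_insert, iSup_insert, iSup_insert, iSup_insert, h2]
      _ = ⨆ t ∈ Set.range e, ENNReal.ofReal (Z t ω) := by rw [← hrange]
      _ = ⨆ i, ENNReal.ofReal (Z (e i) ω) := iSup_range
  have hKeq : ∀ᵐ ω ∂P, (⨆ t ∈ Icc (0:ℝ) 1, ENNReal.ofReal (Z t ω))
      = ⨆ i, ENNReal.ofReal (Z (e i) ω) := hD₀ae.mono fun ω h => hpt ω h
  -- KD is measurable, integrable
  have hKDm : Measurable (fun ω => ⨆ i, ENNReal.ofReal (Z (e i) ω)) :=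
    Measurable.iSup fun i => ENNReal.measurable_ofReal.comp (hZm (e i))
  have hIeq : esupField1 P Z (Icc 0 1)
      = ∫⁻ ω, ⨆ i, ENNReal.ofReal (Z (e i) ω) ∂P := lintegral_congr_ae hKeq
  have hKDint : (∫⁻ ω, ⨆ i, ENNReal.ofReal (Z (e i) ω) ∂P) ≠ ⊤ := hIeq ▸ hfin
  have hKDfin : ∀ᵐ ω ∂P, (⨆ i, ENNReal.ofReal (Z (e i) ω)) < ⊤ := ae_lt_top hKDm hKDint
  -- grid facts
  have hgrid_sub : ∀ δ : ℝ, 0 < δ →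
      (Icc 0 ((⌊1 / δ⌋ : ℝ) * δ) ∩ pickandsGrid1 δ) ⊆ Icc (0:ℝ) 1 := by
    intro δ hδ t ⟨⟨ht0, ht1⟩, _⟩
    refine ⟨ht0, ht1.trans ?_⟩
    have h1 : (⌊1 / δ⌋ : ℝ) ≤ 1 / δ := Int.floor_le _
    calc (⌊1 / δ⌋ : ℝ) * δ ≤ (1 / δ) * δ := by
          exact mul_le_mul_of_nonneg_right h1 hδ.le
      _ = 1 := by field_simp
  have hgp_mem : ∀ δ : ℝ, 0 < δ → ∀ s ∈ Icc (0:ℝ) 1,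
      δ * (⌊s / δ⌋ : ℝ) ∈ Icc 0 ((⌊1 / δ⌋ : ℝ) * δ) ∩ pickandsGrid1 δ := by
    intro δ hδ s ⟨hs0, hs1⟩
    have hk0 : (0:ℤ) ≤ ⌊s / δ⌋ := Int.floor_nonneg.mpr (div_nonneg hs0 hδ.le)
    have hkk : ⌊s / δ⌋ ≤ ⌊1 / δ⌋ := by
      apply Int.floor_le_floor
      gcongr
    constructor
    · constructor
      · exact mul_nonneg hδ.le (by exact_mod_cast hk0)
      · calc δ * (⌊s / δ⌋ : ℝ) ≤ δ * (⌊1 / δ⌋ : ℝ) := by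
              apply mul_le_mul_of_nonneg_left _ hδ.le
              exact_mod_cast hkk
          _ = (⌊1 / δ⌋ : ℝ) * δ := mul_comm _ _
    · rw [pickandsGrid1, if_neg hδ.ne']
      exact ⟨⌊s / δ⌋, rfl⟩
  have hgp01 : ∀ δ : ℝ, 0 < δ → ∀ s ∈ Icc (0:ℝ) 1, δ * (⌊s / δ⌋ : ℝ) ∈ Icc (0:ℝ) 1 :=
    fun δ hδ s hs => hgrid_sub δ hδ (hgp_mem δ hδ s hs)
  -- partial maxima F n
  have hFmeas : ∀ n : ℕ, Measurable
      (fun ω => ⨆ i ∈ Finset.range (n+1), ENNReal.ofReal (Z (e i) ω)) := by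
    intro n
    exact Measurable.iSup fun i =>
      Measurable.iSup_Prop _ (ENNReal.measurable_ofReal.comp (hZm (e i)))
  have hFmono : ∀ ω, Monotone
      (fun n => ⨆ i ∈ Finset.range (n+1), ENNReal.ofReal (Z (e i) ω)) := by
    intro ω n m hnm
    exact biSup_mono fun i hi => Finset.mem_range.mpr
      ((Finset.mem_range.mp hi).trans_le (by omega))
  have hFsup : ∀ ω, (⨆ n, ⨆ i ∈ Finset.range (n+1), ENNReal.ofReal (Z (e i) ω))
      = ⨆ i, ENNReal.ofReal (Z (e i) ω) := by
    intro ω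
    refine le_antisymm (iSup_le fun n => iSup₂_le fun i _ =>
        le_iSup (f := fun i => ENNReal.ofReal (Z (e i) ω)) i)
      (iSup_le fun i => le_iSup_of_le i ?_)
    exact le_iSup₂ (f := fun j (_ : j ∈ Finset.range (i+1)) => ENNReal.ofReal (Z (e j) ω))
      i (Finset.self_mem_range_succ i)
  ----------------------------------------------------------------
  -- PART 1 : convergence in probability
  ----------------------------------------------------------------
  have part1 : ∀ ε > (0 : ℝ),
      Tendsto
        (fun δ : ℝ => P {ω |
          ε ≤ |(⨆ t ∈ Set.Icc 0 ((⌊1 / δ⌋ : ℝ) * δ) ∩ pickandsGrid1 δ, Z t ω) -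
            ⨆ t ∈ Set.Icc (0 : ℝ) 1, Z t ω|})
        (𝓝[>] 0) (𝓝 0) := by
    intro ε hε
    rw [ENNReal.tendsto_nhds_zero]
    intro η hη
    have hη2 : (0:ℝ≥0∞) < η / 2 := ENNReal.half_pos hη.ne'
    -- the sets A n
    set A : ℕ → Set Ω := fun n => {ω |
      ENNReal.ofReal (ε/2) + (⨆ i ∈ Finset.range (n+1), ENNReal.ofReal (Z (e i) ω))
        ≤ ⨆ i, ENNReal.ofReal (Z (e i) ω)} with hA
    have hAmeas : ∀ n, MeasurableSet (A n) := fun n =>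
      measurableSet_le (measurable_const.add (hFmeas n)) hKDm
    have hAanti : Antitone A := by
      intro n m hnm ω hω
      exact le_trans (add_le_add_right (hFmono ω hnm) _) hω
    have hAint : P (⋂ n, A n) = 0 := by
      refine measure_mono_null ?_ (ae_iff.mp hKDfin)
      intro ω hω
      simp only [mem_iInter, hA, mem_setOf_eq] at hω
      simp only [mem_setOf_eq, not_lt, top_le_iff]
      by_contra hne
      have hlt : (⨆ i, ENNReal.ofReal (Z (e i) ω)) < ⊤ := lt_top_iff_ne_top.mpr hne
      have h1 : ENNReal.ofReal (ε/2) + (⨆ n, ⨆ i ∈ Finset.range (n+1),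
          ENNReal.ofReal (Z (e i) ω)) ≤ ⨆ i, ENNReal.ofReal (Z (e i) ω) := by
        rw [ENNReal.add_iSup]
        exact iSup_le fun n => hω n
      rw [hFsup ω] at h1
      have h2 : (⨆ i, ENNReal.ofReal (Z (e i) ω))
          < ENNReal.ofReal (ε/2) + ⨆ i, ENNReal.ofReal (Z (e i) ω) := by
        rw [add_comm]
        exact ENNReal.lt_add_right hne (by simp [ENNReal.ofReal_pos, half_pos hε])
      exact absurd h1 (not_le.mpr h2)
    have hAtend : Tendsto (fun n => P (A n)) atTop (𝓝 0) := by
      have := tendsto_measure_iInter_atTop (fun n => (hAmeas n).nullMeasurableSet)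
        hAanti ⟨0, measure_ne_top P _⟩
      rwa [hAint] at this
    obtain ⟨n, hn⟩ := (ENNReal.tendsto_nhds_zero.mp hAtend (η/2) hη2).exists
    -- the events B i δ
    have hBtend : ∀ i : ℕ, Tendsto
        (fun δ : ℝ => P {ω | ε/2 ≤ |Z (δ * (⌊e i / δ⌋ : ℝ)) ω - Z (e i) ω|})
        (𝓝[>] 0) (𝓝 0) :=
      fun i => (hsc (e i) (ε/2) (half_pos hε)).comp (aux_tendsto_gp (he i).1)
    have hsum : Tendsto (fun δ : ℝ => ∑ i ∈ Finset.range (n+1),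
        P {ω | ε/2 ≤ |Z (δ * (⌊e i / δ⌋ : ℝ)) ω - Z (e i) ω|}) (𝓝[>] 0) (𝓝 0) := by
      have := tendsto_finset_sum (Finset.range (n+1)) (fun i _ => hBtend i)
      simpa using this
    have hsum' := ENNReal.tendsto_nhds_zero.mp hsum (η/2) hη2
    filter_upwards [self_mem_nhdsWithin, hsum'] with δ (hδ : 0 < δ) hsδ
    -- event inclusion
    have hincl : {ω | ε ≤ |(⨆ t ∈ Set.Icc 0 ((⌊1 / δ⌋ : ℝ) * δ) ∩ pickandsGrid1 δ, Z t ω) -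
          ⨆ t ∈ Set.Icc (0 : ℝ) 1, Z t ω|}
        ⊆ {ω | ¬((⨆ t ∈ Icc (0:ℝ) 1, ENNReal.ofReal (Z t ω))
              = (⨆ i, ENNReal.ofReal (Z (e i) ω))
            ∧ (⨆ i, ENNReal.ofReal (Z (e i) ω)) < ⊤)}
          ∪ (A n ∪ ⋃ i ∈ Finset.range (n+1),
              {ω | ε/2 ≤ |Z (δ * (⌊e i / δ⌋ : ℝ)) ω - Z (e i) ω|}) := by
      intro ω hω
      by_cases hg : (⨆ t ∈ Icc (0:ℝ) 1, ENNReal.ofReal (Z t ω))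
          = (⨆ i, ENNReal.ofReal (Z (e i) ω))
          ∧ (⨆ i, ENNReal.ofReal (Z (e i) ω)) < ⊤
      swap
      · exact Or.inl hg
      right
      obtain ⟨hK, hKfin⟩ := hg
      simp only [mem_setOf_eq] at hω
      set c : ℝ := (⨆ i, ENNReal.ofReal (Z (e i) ω)).toReal with hcdef
      have hc0 : (0:ℝ) ≤ c := ENNReal.toReal_nonneg
      have hbound : ∀ t ∈ Icc (0:ℝ) 1, Z t ω ≤ c := by
        intro t ht
        have h1 : ENNReal.ofReal (Z t ω) ≤ ⨆ t ∈ Icc (0:ℝ) 1, ENNReal.ofReal (Z t ω) :=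
          le_iSup₂ (f := fun t (_ : t ∈ Icc (0:ℝ) 1) => ENNReal.ofReal (Z t ω)) t ht
        rw [hK] at h1
        have h2 := ENNReal.toReal_mono hKfin.ne h1
        rwa [ENNReal.toReal_ofReal (hnn t ω)] at h2
      have hboundΔ : ∀ t ∈ Icc 0 ((⌊1 / δ⌋ : ℝ) * δ) ∩ pickandsGrid1 δ, Z t ω ≤ c :=
        fun t ht => hbound t (hgrid_sub δ hδ ht)
      have hRMof : ENNReal.ofReal (⨆ t ∈ Icc (0:ℝ) 1, Z t ω)
          = ⨆ t ∈ Icc (0:ℝ) 1, ENNReal.ofReal (Z t ω) :=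
        aux_ofReal_biSup (fun t => hnn t ω) hc0 hbound
      have hRΔof : ENNReal.ofReal (⨆ t ∈ Icc 0 ((⌊1 / δ⌋ : ℝ) * δ) ∩ pickandsGrid1 δ, Z t ω)
          = ⨆ t ∈ Icc 0 ((⌊1 / δ⌋ : ℝ) * δ) ∩ pickandsGrid1 δ, ENNReal.ofReal (Z t ω) :=
        aux_ofReal_biSup (fun t => hnn t ω) hc0 hboundΔ
      have hRM0 : (0:ℝ) ≤ ⨆ t ∈ Icc (0:ℝ) 1, Z t ω :=
        Real.iSup_nonneg fun t => Real.iSup_nonneg fun _ => hnn t ω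
      have hRΔ0 : (0:ℝ) ≤ ⨆ t ∈ Icc 0 ((⌊1 / δ⌋ : ℝ) * δ) ∩ pickandsGrid1 δ, Z t ω :=
        Real.iSup_nonneg fun t => Real.iSup_nonneg fun _ => hnn t ω
      have hEleK : (⨆ t ∈ Icc 0 ((⌊1 / δ⌋ : ℝ) * δ) ∩ pickandsGrid1 δ,
          ENNReal.ofReal (Z t ω)) ≤ ⨆ t ∈ Icc (0:ℝ) 1, ENNReal.ofReal (Z t ω) :=
        biSup_mono fun t ht => hgrid_sub δ hδ ht
      have hRle : (⨆ t ∈ Icc 0 ((⌊1 / δ⌋ : ℝ) * δ) ∩ pickandsGrid1 δ, Z t ω)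
          ≤ ⨆ t ∈ Icc (0:ℝ) 1, Z t ω := by
        rw [← ENNReal.ofReal_le_ofReal_iff hRM0, hRMof, hRΔof]
        exact hEleK
      have habs : ε ≤ (⨆ t ∈ Icc (0:ℝ) 1, Z t ω)
          - ⨆ t ∈ Icc 0 ((⌊1 / δ⌋ : ℝ) * δ) ∩ pickandsGrid1 δ, Z t ω := by
        rwa [abs_sub_comm, abs_of_nonneg (sub_nonneg.mpr hRle)] at hω
      by_cases hAcase : ω ∈ A n
      · exact Or.inl hAcase
      right
      simp only [hA, mem_setOf_eq, not_le] at hAcase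
      -- derive the key inequality
      have hkey : ENNReal.ofReal (⨆ t ∈ Icc 0 ((⌊1 / δ⌋ : ℝ) * δ) ∩ pickandsGrid1 δ, Z t ω)
          + ENNReal.ofReal (ε/2)
          < ⨆ i ∈ Finset.range (n+1), ENNReal.ofReal (Z (e i) ω) := by
        have h1 : ENNReal.ofReal (⨆ t ∈ Icc 0 ((⌊1 / δ⌋ : ℝ) * δ) ∩ pickandsGrid1 δ, Z t ω)
            + (ENNReal.ofReal (ε/2) + ENNReal.ofReal (ε/2))
            ≤ ⨆ i, ENNReal.ofReal (Z (e i) ω) := by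
          rw [← ENNReal.ofReal_add (half_pos hε).le (half_pos hε).le, add_halves,
            ← ENNReal.ofReal_add hRΔ0 hε.le, ← hK, ← hRMof]
          apply ENNReal.ofReal_le_ofReal
          linarith
        have h2 : ENNReal.ofReal (ε/2) +
            (ENNReal.ofReal (⨆ t ∈ Icc 0 ((⌊1 / δ⌋ : ℝ) * δ) ∩ pickandsGrid1 δ, Z t ω)
              + ENNReal.ofReal (ε/2))
            < ENNReal.ofReal (ε/2)
              + ⨆ i ∈ Finset.range (n+1), ENNReal.ofReal (Z (e i) ω) := by
          calc ENNReal.ofReal (ε/2) +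
              (ENNReal.ofReal (⨆ t ∈ Icc 0 ((⌊1 / δ⌋ : ℝ) * δ) ∩ pickandsGrid1 δ, Z t ω)
                + ENNReal.ofReal (ε/2))
              = ENNReal.ofReal (⨆ t ∈ Icc 0 ((⌊1 / δ⌋ : ℝ) * δ) ∩ pickandsGrid1 δ, Z t ω)
                + (ENNReal.ofReal (ε/2) + ENNReal.ofReal (ε/2)) := by ring
            _ ≤ ⨆ i, ENNReal.ofReal (Z (e i) ω) := h1
            _ < _ := hAcase
        exact (ENNReal.add_lt_add_iff_left ENNReal.ofReal_ne_top).mp h2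
      rw [lt_iSup_iff] at hkey
      obtain ⟨i, hkey⟩ := hkey
      rw [lt_iSup_iff] at hkey
      obtain ⟨hi, hkey⟩ := hkey
      refine mem_iUnion₂.mpr ⟨i, hi, ?_⟩
      have hgple : ENNReal.ofReal (Z (δ * (⌊e i / δ⌋ : ℝ)) ω)
          ≤ ENNReal.ofReal (⨆ t ∈ Icc 0 ((⌊1 / δ⌋ : ℝ) * δ) ∩ pickandsGrid1 δ, Z t ω) := by
        rw [hRΔof]
        exact le_iSup₂ (f := fun t (_ : t ∈ Icc 0 ((⌊1 / δ⌋ : ℝ) * δ) ∩ pickandsGrid1 δ)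
          => ENNReal.ofReal (Z t ω)) _ (hgp_mem δ hδ (e i) (he i))
      have hreal : Z (δ * (⌊e i / δ⌋ : ℝ)) ω + ε/2 < Z (e i) ω := by
        by_contra hcon
        push_neg at hcon
        have : ENNReal.ofReal (Z (e i) ω)
            ≤ ENNReal.ofReal (Z (δ * (⌊e i / δ⌋ : ℝ)) ω) + ENNReal.ofReal (ε/2) := by
          rw [← ENNReal.ofReal_add (hnn _ ω) (half_pos hε).le]
          exact ENNReal.ofReal_le_ofReal hcon
        exact absurd (this.trans (add_le_add_left hgple _)) (not_le.mpr hkey)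
      simp only [mem_setOf_eq]
      rw [abs_of_nonpos (by linarith)]
      linarith
    -- conclude via measure bounds
    have hnull : P {ω | ¬((⨆ t ∈ Icc (0:ℝ) 1, ENNReal.ofReal (Z t ω))
          = (⨆ i, ENNReal.ofReal (Z (e i) ω))
        ∧ (⨆ i, ENNReal.ofReal (Z (e i) ω)) < ⊤)} = 0 := by
      have := hKeq.and hKDfin
      exact ae_iff.mp this
    calc P {ω | ε ≤ |(⨆ t ∈ Set.Icc 0 ((⌊1 / δ⌋ : ℝ) * δ) ∩ pickandsGrid1 δ, Z t ω) -
          ⨆ t ∈ Set.Icc (0 : ℝ) 1, Z t ω|}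
        ≤ P ({ω | ¬((⨆ t ∈ Icc (0:ℝ) 1, ENNReal.ofReal (Z t ω))
              = (⨆ i, ENNReal.ofReal (Z (e i) ω))
            ∧ (⨆ i, ENNReal.ofReal (Z (e i) ω)) < ⊤)}
          ∪ (A n ∪ ⋃ i ∈ Finset.range (n+1),
              {ω | ε/2 ≤ |Z (δ * (⌊e i / δ⌋ : ℝ)) ω - Z (e i) ω|})) := measure_mono hincl
      _ ≤ P {ω | ¬((⨆ t ∈ Icc (0:ℝ) 1, ENNReal.ofReal (Z t ω))
              = (⨆ i, ENNReal.ofReal (Z (e i) ω))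
            ∧ (⨆ i, ENNReal.ofReal (Z (e i) ω)) < ⊤)}
          + P (A n ∪ ⋃ i ∈ Finset.range (n+1),
              {ω | ε/2 ≤ |Z (δ * (⌊e i / δ⌋ : ℝ)) ω - Z (e i) ω|}) := measure_union_le _ _
      _ = P (A n ∪ ⋃ i ∈ Finset.range (n+1),
              {ω | ε/2 ≤ |Z (δ * (⌊e i / δ⌋ : ℝ)) ω - Z (e i) ω|}) := by
            rw [hnull, zero_add]
      _ ≤ P (A n) + P (⋃ i ∈ Finset.range (n+1),
              {ω | ε/2 ≤ |Z (δ * (⌊e i / δ⌋ : ℝ)) ω - Z (e i) ω|}) := measure_union_le _ _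
      _ ≤ η/2 + ∑ i ∈ Finset.range (n+1),
              P {ω | ε/2 ≤ |Z (δ * (⌊e i / δ⌋ : ℝ)) ω - Z (e i) ω|} :=
            add_le_add hn (measure_biUnion_finset_le _ _)
      _ ≤ η/2 + η/2 := add_le_add_right hsδ _
      _ = η := ENNReal.add_halves η
  ----------------------------------------------------------------
  -- PART 2 : convergence of expectations
  ----------------------------------------------------------------
  have part2 : Tendsto
      (fun δ : ℝ => esupField1 P Z (Set.Icc 0 ((⌊1 / δ⌋ : ℝ) * δ) ∩ pickandsGrid1 δ))
      (𝓝[>] 0) (𝓝 (esupField1 P Z (Set.Icc 0 1))) := by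
    have hg_le : ∀ᶠ δ in 𝓝[>] (0:ℝ),
        esupField1 P Z (Set.Icc 0 ((⌊1 / δ⌋ : ℝ) * δ) ∩ pickandsGrid1 δ)
          ≤ esupField1 P Z (Set.Icc 0 1) := by
      filter_upwards [self_mem_nhdsWithin] with δ (hδ : 0 < δ)
      exact lintegral_mono fun ω => biSup_mono fun t ht => hgrid_sub δ hδ ht
    -- the approximating integrals
    have hFint_tendsto : Tendsto
        (fun n => ∫⁻ ω, ⨆ i ∈ Finset.range (n+1), ENNReal.ofReal (Z (e i) ω) ∂P)
        atTop (𝓝 (esupField1 P Z (Set.Icc 0 1))) := by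
      have h1 : Monotone (fun n ω => ⨆ i ∈ Finset.range (n+1),
          ENNReal.ofReal (Z (e i) ω)) := fun n m hnm ω => hFmono ω hnm
      have h2 := lintegral_iSup (μ := P) hFmeas h1
      have h3 : (∫⁻ ω, ⨆ n, ⨆ i ∈ Finset.range (n+1), ENNReal.ofReal (Z (e i) ω) ∂P)
          = esupField1 P Z (Set.Icc 0 1) := by
        rw [hIeq]
        exact lintegral_congr fun ω => hFsup ω
      have h4 : Monotone (fun n =>
          ∫⁻ ω, ⨆ i ∈ Finset.range (n+1), ENNReal.ofReal (Z (e i) ω) ∂P) :=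
        fun n m hnm => lintegral_mono fun ω => hFmono ω hnm
      have := tendsto_atTop_iSup h4
      rwa [← h2, h3] at this
    -- convergence of the grid approximations, for fixed n
    have hGn : ∀ n : ℕ, Tendsto
        (fun δ : ℝ => ∫⁻ ω, ⨆ i ∈ Finset.range (n+1),
          ENNReal.ofReal (Z (δ * (⌊e i / δ⌋ : ℝ)) ω) ∂P)
        (𝓝[>] 0)
        (𝓝 (∫⁻ ω, ⨆ i ∈ Finset.range (n+1), ENNReal.ofReal (Z (e i) ω) ∂P)) := by
      intro n
      apply tendsto_of_subseq_tendsto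
      intro u hu
      obtain ⟨M, hM⟩ := eventually_atTop.mp (hu.eventually self_mem_nhdsWithin)
      set v : ℕ → ℝ := fun k => u (k + M) with hv
      have hvpos : ∀ k, 0 < v k := fun k => hM (k + M) (by omega)
      have hvt : Tendsto v atTop (𝓝[>] 0) := hu.comp (tendsto_add_atTop_nat M)
      -- convergence in measure of the vector of grid values
      have htim : TendstoInMeasure P
          (fun k ω => fun i : Fin (n+1) => Z (v k * (⌊e i.val / v k⌋ : ℝ)) ω) atTop
          (fun ω => fun i : Fin (n+1) => Z (e i.val) ω) := by
        rw [tendstoInMeasure_iff_dist]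
        intro ρ hρ
        have hsum : Tendsto (fun k => ∑ i : Fin (n+1),
            P {ω | ρ ≤ |Z (v k * (⌊e i.val / v k⌋ : ℝ)) ω - Z (e i.val) ω|})
            atTop (𝓝 0) := by
          have h := tendsto_finset_sum (Finset.univ : Finset (Fin (n+1)))
            (fun i _ => ((hsc (e i.val) ρ hρ).comp
              ((aux_tendsto_gp (he i.val).1).comp hvt)))
          simpa using h
        refine tendsto_of_tendsto_of_tendsto_of_le_of_le tendsto_const_nhds hsum
          (fun k => bot_le) (fun k => ?_)
        refine le_trans (measure_mono ?_) (measure_iUnion_fintype_le P _)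
        intro ω hω
        simp only [mem_setOf_eq] at hω
        by_contra hcon
        simp only [mem_iUnion, mem_setOf_eq, not_exists, not_le] at hcon
        have := (dist_pi_lt_iff hρ).mpr fun i => by
          rw [Real.dist_eq]; exact hcon i
        exact absurd hω (not_le.mpr this)
      obtain ⟨ms, hms_mono, hae⟩ := htim.exists_seq_tendsto_ae
      refine ⟨fun k => ms k + M, ?_⟩
      have heq : ∀ k, u (ms k + M) = v (ms k) := fun k => rfl
      simp only [heq]
      -- dominated convergence along the a.e. convergent subsequence
      apply tendsto_lintegral_of_dominated_convergence
        (fun ω => ⨆ i, ENNReal.ofReal (Z (e i) ω))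
      · intro k
        exact Measurable.iSup fun i =>
          Measurable.iSup_Prop _ (ENNReal.measurable_ofReal.comp (hZm _))
      · intro k
        filter_upwards [hKeq] with ω hK
        refine iSup₂_le fun i _ => ?_
        rw [← hK]
        exact le_iSup₂ (f := fun t (_ : t ∈ Icc (0:ℝ) 1) => ENNReal.ofReal (Z t ω)) _
          (hgp01 (v (ms k)) (hvpos (ms k)) (e i) (he i))
      · exact hKDint
      · filter_upwards [hae] with ω hω
        have hcoord : ∀ i : Fin (n+1), Tendsto
            (fun k => Z (v (ms k) * (⌊e i.val / v (ms k)⌋ : ℝ)) ω) atTop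
            (𝓝 (Z (e i.val) ω)) := tendsto_pi_nhds.mp hω
        apply aux_tendsto_biSup (Finset.range (n+1))
        intro i hi
        exact (ENNReal.continuous_ofReal.tendsto _).comp
          (hcoord ⟨i, Finset.mem_range.mp hi⟩)
    -- liminf and limsup
    have hliminf : esupField1 P Z (Set.Icc 0 1) ≤ liminf
        (fun δ : ℝ => esupField1 P Z (Set.Icc 0 ((⌊1 / δ⌋ : ℝ) * δ) ∩ pickandsGrid1 δ))
        (𝓝[>] 0) := by
      have hn : ∀ n : ℕ,
          (∫⁻ ω, ⨆ i ∈ Finset.range (n+1), ENNReal.ofReal (Z (e i) ω) ∂P) ≤ liminf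
          (fun δ : ℝ => esupField1 P Z (Set.Icc 0 ((⌊1 / δ⌋ : ℝ) * δ) ∩ pickandsGrid1 δ))
          (𝓝[>] 0) := by
        intro n
        rw [← (hGn n).liminf_eq]
        have hev' : ∀ᶠ δ in 𝓝[>] (0:ℝ),
            (∫⁻ ω, ⨆ i ∈ Finset.range (n+1),
              ENNReal.ofReal (Z (δ * (⌊e i / δ⌋ : ℝ)) ω) ∂P)
            ≤ esupField1 P Z (Set.Icc 0 ((⌊1 / δ⌋ : ℝ) * δ) ∩ pickandsGrid1 δ) := by
          filter_upwards [self_mem_nhdsWithin] with δ (hδ : 0 < δ)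
          apply lintegral_mono
          intro ω
          refine iSup₂_le fun i _ => ?_
          exact le_iSup₂ (f := fun t (_ : t ∈ Icc 0 ((⌊1 / δ⌋ : ℝ) * δ) ∩ pickandsGrid1 δ)
            => ENNReal.ofReal (Z t ω)) _ (hgp_mem δ hδ (e i) (he i))
        exact liminf_le_liminf hev'
      exact le_of_tendsto hFint_tendsto (Eventually.of_forall hn)
    have hlimsup : limsup
        (fun δ : ℝ => esupField1 P Z (Set.Icc 0 ((⌊1 / δ⌋ : ℝ) * δ) ∩ pickandsGrid1 δ))
        (𝓝[>] 0) ≤ esupField1 P Z (Set.Icc 0 1) := limsup_le_of_le (by isBoundedDefault) hg_le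
    exact tendsto_of_le_liminf_of_limsup_le hliminf hlimsup
  exact ⟨part1, part2, lt_top_iff_ne_top.mpr hfin⟩
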